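/- Let k ≥ 1 be a natural number, σ_1, …, σ_k > 0 and s_1, …, s_k ∈ ℝ. Then the pushforward of the product measure ⨂_{d=1}^k N(0, σ_d²) on ℝ^k under the map x ↦ Σ_{d=1}^k (s_d² − 2·s_d·x_d)/(2σ_d²) equals the Gaussian probability measure N(Σ_{d=1}^k s_d²/(2σ_d²), Σ_{d=1}^k s_d²/σ_d²) on ℝ. -/

import Mathlib

open MeasureTheory ProbabilityTheory Real
open scoped NNReal ENNReal

lemma gaussianPDFReal_le (v : ℝ≥0) (x : ℝ) :
    gaussianPDFReal 0 v x ≤ (√(2 * π * v))⁻¹ := by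
  rw [gaussianPDFReal]
  have h1 : rexp (-(x - 0)^2 / (2 * v)) ≤ 1 := by
    rw [Real.exp_le_one_iff]
    apply div_nonpos_of_nonpos_of_nonneg
    · simp [sq_nonneg]
    · positivity
  calc (√(2 * π * ↑v))⁻¹ * rexp (-(x - 0) ^ 2 / (2 * ↑v))
      ≤ (√(2 * π * ↑v))⁻¹ * 1 := by
        gcongr
    _ = (√(2 * π * ↑v))⁻¹ := mul_one _

lemma gauss_conv_integrable (v₁ v₂ : ℝ≥0) (z : ℝ) :
    Integrable (fun x => gaussianPDFReal 0 v₁ x * gaussianPDFReal 0 v₂ (z - x)) := by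
  simp_rw [mul_comm (gaussianPDFReal 0 v₁ _)]
  refine Integrable.bdd_mul (c := (√(2 * π * v₂))⁻¹) (integrable_gaussianPDFReal 0 v₁) ?_ ?_
  · exact ((measurable_gaussianPDFReal 0 v₂).comp (measurable_const.sub measurable_id)).aestronglyMeasurable
  · refine Filter.Eventually.of_forall (fun x => ?_)
    rw [Real.norm_eq_abs, abs_of_nonneg (gaussianPDFReal_nonneg _ _ _)]
    exact gaussianPDFReal_le v₂ _

lemma gauss_conv_integrand' (v₁ v₂ : ℝ≥0) (h₁ : v₁ ≠ 0) (h₂ : v₂ ≠ 0) (z : ℝ) :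
    ∫ x : ℝ, gaussianPDFReal 0 v₁ x * gaussianPDFReal 0 v₂ (z - x) =
      gaussianPDFReal 0 (v₁ + v₂) z := by
  have ha : (0:ℝ) < v₁ := lt_of_le_of_ne v₁.coe_nonneg (by exact_mod_cast (Ne.symm h₁))
  have hb : (0:ℝ) < v₂ := lt_of_le_of_ne v₂.coe_nonneg (by exact_mod_cast (Ne.symm h₂))
  set a : ℝ := (v₁ : ℝ)
  set b : ℝ := (v₂ : ℝ)
  set A : ℝ := (a + b) / (2 * a * b) with hA
  have hApos : 0 < A := by positivity
  set m : ℝ := z * a / (a + b) with hm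
  have key : ∀ x : ℝ, gaussianPDFReal 0 v₁ x * gaussianPDFReal 0 v₂ (z - x)
      = ((√(2 * π * a))⁻¹ * (√(2 * π * b))⁻¹ * rexp (- z^2 / (2 * (a + b))))
        * rexp (-A * (x - m)^2) := by
    intro x
    simp only [gaussianPDFReal, sub_zero, NNReal.coe_add]
    rw [show ((v₁ : ℝ)) = a from rfl, show ((v₂ : ℝ)) = b from rfl]
    have hab : a + b ≠ 0 := by positivity
    have hexp : rexp (-x ^ 2 / (2 * a) + -(z - x) ^ 2 / (2 * b))
        = rexp (- z^2 / (2 * (a + b))) * rexp (-A * (x - m)^2) := by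
      rw [← Real.exp_add]
      congr 1
      rw [hA, hm]
      field_simp
      ring
    rw [mul_mul_mul_comm, ← Real.exp_add, hexp]
    ring
  rw [MeasureTheory.integral_congr_ae (Filter.Eventually.of_forall key),
    MeasureTheory.integral_const_mul]
  have : ∫ x : ℝ, rexp (-A * (x - m)^2) = √(π / A) := by
    rw [integral_sub_right_eq_self (fun x => rexp (-A * x ^ 2)) m]
    exact integral_gaussian A
  rw [this]
  simp only [gaussianPDFReal, sub_zero, NNReal.coe_add]
  rw [show ((v₁ : ℝ)) = a from rfl, show ((v₂ : ℝ)) = b from rfl]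
  have hconst : (√(2 * π * a))⁻¹ * (√(2 * π * b))⁻¹ * √(π / A)
      = (√(2 * π * (a + b)))⁻¹ := by
    rw [← Real.sqrt_inv, ← Real.sqrt_inv, ← Real.sqrt_inv, ← Real.sqrt_mul (by positivity),
      ← Real.sqrt_mul (by positivity)]
    congr 1
    rw [hA]
    field_simp
  rw [← hconst]; ring

lemma gauss_conv_lintegral (v₁ v₂ : ℝ≥0) (h₁ : v₁ ≠ 0) (h₂ : v₂ ≠ 0) (z : ℝ) :
    ∫⁻ x : ℝ, gaussianPDF 0 v₁ x * gaussianPDF 0 v₂ (z - x) =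
      gaussianPDF 0 (v₁ + v₂) z := by
  simp only [gaussianPDF]
  have h : ∀ x : ℝ, ENNReal.ofReal (gaussianPDFReal 0 v₁ x) *
      ENNReal.ofReal (gaussianPDFReal 0 v₂ (z - x))
      = ENNReal.ofReal (gaussianPDFReal 0 v₁ x * gaussianPDFReal 0 v₂ (z - x)) := fun x =>
    (ENNReal.ofReal_mul (gaussianPDFReal_nonneg _ _ _)).symm
  simp_rw [h]
  rw [← ofReal_integral_eq_lintegral_ofReal (gauss_conv_integrable v₁ v₂ z)
    (Filter.Eventually.of_forall fun x =>
      mul_nonneg (gaussianPDFReal_nonneg _ _ _) (gaussianPDFReal_nonneg _ _ _)),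
    gauss_conv_integrand' v₁ v₂ h₁ h₂ z]

lemma gauss_conv_zero (v₁ v₂ : ℝ≥0) (h₁ : v₁ ≠ 0) (h₂ : v₂ ≠ 0) :
    Measure.map (fun p : ℝ × ℝ => p.1 + p.2)
      ((gaussianReal 0 v₁).prod (gaussianReal 0 v₂)) = gaussianReal 0 (v₁ + v₂) := by
  rw [gaussianReal_of_var_ne_zero _ h₁, gaussianReal_of_var_ne_zero _ h₂,
    gaussianReal_of_var_ne_zero _ (by simp [h₁])]
  ext t ht
  rw [Measure.map_apply measurable_add ht, withDensity_apply _ ht]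
  rw [Measure.prod_apply (measurable_add ht)]
  have hg := measurable_gaussianPDF 0 v₂
  have hf := measurable_gaussianPDF 0 v₁
  have hinner : ∀ x : ℝ, (volume.withDensity (gaussianPDF 0 v₂))
      (Prod.mk x ⁻¹' ((fun p : ℝ × ℝ => p.1 + p.2) ⁻¹' t))
      = ∫⁻ z, t.indicator (fun z => gaussianPDF 0 v₂ (z - x)) z := by
    intro x
    have hset : (Prod.mk x ⁻¹' ((fun p : ℝ × ℝ => p.1 + p.2) ⁻¹' t)) = {y : ℝ | x + y ∈ t} := rfl
    have hset' : MeasurableSet {y : ℝ | x + y ∈ t} :=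
      ht.preimage (measurable_const.add measurable_id)
    rw [hset, withDensity_apply _ hset', ← lintegral_indicator hset',
      ← lintegral_add_left_eq_self (fun z => t.indicator (fun z => gaussianPDF 0 v₂ (z - x)) z) x]
    congr 1 with y
    by_cases hy : x + y ∈ t
    · simp [Set.indicator, hy, Set.mem_setOf_eq]
    · simp [Set.indicator, hy, Set.mem_setOf_eq]
  simp_rw [hinner]
  have hmeas : Measurable (fun p : ℝ × ℝ =>
      t.indicator (fun z => gaussianPDF 0 v₁ p.1 * gaussianPDF 0 v₂ (z - p.1)) p.2) := by
    have : (fun p : ℝ × ℝ =>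
        t.indicator (fun z => gaussianPDF 0 v₁ p.1 * gaussianPDF 0 v₂ (z - p.1)) p.2)
        = Set.indicator (Prod.snd ⁻¹' t)
            (fun p : ℝ × ℝ => gaussianPDF 0 v₁ p.1 * gaussianPDF 0 v₂ (p.2 - p.1)) := by
      ext p
      by_cases hp : p.2 ∈ t
      · simp [Set.indicator, hp]
      · simp [Set.indicator, hp]
    rw [this]
    exact Measurable.indicator
      ((hf.comp measurable_fst).mul (hg.comp (measurable_snd.sub measurable_fst)))
      (ht.preimage measurable_snd)
  rw [lintegral_withDensity_eq_lintegral_mul _ hf]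
  swap
  · exact Measurable.lintegral_prod_right (f := fun x z =>
      t.indicator (fun z => gaussianPDF 0 v₂ (z - x)) z) (by
        have : (Function.uncurry fun (x z : ℝ) =>
            t.indicator (fun z => gaussianPDF 0 v₂ (z - x)) z)
            = Set.indicator (Prod.snd ⁻¹' t)
                (fun p : ℝ × ℝ => gaussianPDF 0 v₂ (p.2 - p.1)) := by
          ext p
          by_cases hp : p.2 ∈ t
          · simp [Set.indicator, hp, Function.uncurry]
          · simp [Set.indicator, hp, Function.uncurry]
        rw [this]
        exact Measurable.indicator (hg.comp (measurable_snd.sub measurable_fst))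
          (ht.preimage measurable_snd))
  have hpush : ∀ x : ℝ, gaussianPDF 0 v₁ x * ∫⁻ z, t.indicator (fun z => gaussianPDF 0 v₂ (z - x)) z
      = ∫⁻ z, t.indicator (fun z => gaussianPDF 0 v₁ x * gaussianPDF 0 v₂ (z - x)) z := by
    intro x
    rw [← lintegral_const_mul _ (by
      exact Measurable.indicator (hg.comp (measurable_id.sub measurable_const)) ht)]
    congr 1 with z
    by_cases hz : z ∈ t
    · simp [Set.indicator, hz]
    · simp [Set.indicator, hz]
  simp only [Pi.mul_apply]
  simp_rw [hpush]
  rw [lintegral_lintegral_swap hmeas.aemeasurable]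
  have hlast : ∀ z : ℝ, (∫⁻ x, t.indicator
      (fun z => gaussianPDF 0 v₁ x * gaussianPDF 0 v₂ (z - x)) z)
      = t.indicator (gaussianPDF 0 (v₁ + v₂)) z := by
    intro z
    by_cases hz : z ∈ t
    · simp only [Set.indicator, hz, if_true]
      exact gauss_conv_lintegral v₁ v₂ h₁ h₂ z
    · simp [Set.indicator, hz]
  simp_rw [hlast]
  rw [lintegral_indicator ht]

lemma gauss_conv (m₁ m₂ : ℝ) (v₁ v₂ : ℝ≥0) :
    Measure.map (fun p : ℝ × ℝ => p.1 + p.2)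
      ((gaussianReal m₁ v₁).prod (gaussianReal m₂ v₂)) = gaussianReal (m₁ + m₂) (v₁ + v₂) := by
  by_cases h₁ : v₁ = 0
  · subst h₁
    rw [gaussianReal_zero_var, Measure.dirac_prod, Measure.map_map measurable_add
      (measurable_prodMk_left), zero_add]
    have : ((fun p : ℝ × ℝ => p.1 + p.2) ∘ Prod.mk m₁) = (fun y => m₁ + y) := rfl
    rw [this, gaussianReal_map_const_add]
    rw [add_comm]
  by_cases h₂ : v₂ = 0
  · subst h₂
    rw [gaussianReal_zero_var, Measure.prod_dirac, Measure.map_map measurable_add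
      (by fun_prop : Measurable fun x : ℝ => (x, m₂)), add_zero]
    have : ((fun p : ℝ × ℝ => p.1 + p.2) ∘ (fun x => (x, m₂))) = (fun x => x + m₂) := rfl
    rw [this, gaussianReal_map_add_const]
  · have e₁ : gaussianReal m₁ v₁ = (gaussianReal 0 v₁).map (· + m₁) := by
      rw [gaussianReal_map_add_const, zero_add]
    have e₂ : gaussianReal m₂ v₂ = (gaussianReal 0 v₂).map (· + m₂) := by
      rw [gaussianReal_map_add_const, zero_add]
    rw [e₁, e₂, Measure.map_prod_map _ _ (measurable_add_const m₁) (measurable_add_const m₂),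
      Measure.map_map measurable_add ((measurable_add_const m₁).prodMap (measurable_add_const m₂))]
    have : ((fun p : ℝ × ℝ => p.1 + p.2) ∘ Prod.map (· + m₁) (· + m₂))
        = ((· + (m₁ + m₂)) ∘ (fun p : ℝ × ℝ => p.1 + p.2)) := by
      ext p; simp [Prod.map]; ring
    rw [this, ← Measure.map_map (measurable_add_const (m₁ + m₂)) measurable_add,
      gauss_conv_zero v₁ v₂ h₁ h₂, gaussianReal_map_add_const, zero_add]

lemma gauss_sum_pi : ∀ (n : ℕ) (m : Fin n → ℝ) (v : Fin n → ℝ≥0),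
    Measure.map (fun x : Fin n → ℝ => ∑ d, x d)
      (Measure.pi fun d => gaussianReal (m d) (v d))
      = gaussianReal (∑ d, m d) (∑ d, v d) := by
  intro n
  induction n with
  | zero =>
    intro m v
    simp only [Finset.univ_eq_empty, Finset.sum_empty]
    rw [show (fun x : Fin 0 → ℝ => (0:ℝ)) = fun _ => (0:ℝ) from rfl]
    rw [Measure.map_const]
    simp [gaussianReal_zero_var]
  | succ n ih =>
    intro m v
    have hmp := measurePreserving_piFinSuccAbove (fun d => gaussianReal (m d) (v d)) 0
    have hsum : (fun x : Fin (n+1) → ℝ => ∑ d, x d)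
        = (fun p : ℝ × (Fin n → ℝ) => p.1 + ∑ j, p.2 j)
          ∘ (MeasurableEquiv.piFinSuccAbove (fun _ => ℝ) 0) := by
      ext x
      simp [MeasurableEquiv.piFinSuccAbove, Fin.sum_univ_succAbove x 0, Fin.tail,
        Fin.succAbove_zero]
    rw [hsum, ← Measure.map_map (by fun_prop) (MeasurableEquiv.measurable _), hmp.map_eq]
    have : (fun p : ℝ × (Fin n → ℝ) => p.1 + ∑ j, p.2 j)
        = (fun p : ℝ × ℝ => p.1 + p.2) ∘ (Prod.map id (fun y : Fin n → ℝ => ∑ j, y j)) := rfl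
    have hsm : Measurable fun y : Fin n → ℝ => ∑ j, y j := by measurability
    rw [this, ← Measure.map_map measurable_add (measurable_id.prodMap hsm),
      ← Measure.map_prod_map _ _ measurable_id hsm, Measure.map_id, ih, gauss_conv,
      Fin.sum_univ_succAbove m 0, Fin.sum_univ_succAbove v 0]

theorem privacy_loss_distribution_composition (k : ℕ) (hk : 1 ≤ k)
    (σ s : Fin k → ℝ) (hσ : ∀ d, 0 < σ d) :
    Measure.map (fun x : Fin k → ℝ => ∑ d, (s d ^ 2 - 2 * s d * x d) / (2 * σ d ^ 2))
        (Measure.pi fun d => gaussianReal 0 (Real.toNNReal (σ d ^ 2))) =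
      gaussianReal (∑ d, s d ^ 2 / (2 * σ d ^ 2))
        (Real.toNNReal (∑ d, s d ^ 2 / σ d ^ 2)) := by
  have hσ2 : ∀ d, (0:ℝ) < σ d ^ 2 := fun d => pow_pos (hσ d) 2
  set f : Fin k → ℝ → ℝ := fun d t => (s d ^ 2 - 2 * s d * t) / (2 * σ d ^ 2) with hf
  have hfm : ∀ d, Measurable (f d) := by intro d; fun_prop
  -- coordinatewise map
  have hstep1 : Measure.map (fun x : Fin k → ℝ => fun d => f d (x d))
      (Measure.pi fun d => gaussianReal 0 (Real.toNNReal (σ d ^ 2)))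
      = Measure.pi (fun d => (gaussianReal 0 (Real.toNNReal (σ d ^ 2))).map (f d)) :=
    (measurePreserving_pi _ _ (fun d => ⟨hfm d, rfl⟩)).map_eq
  -- each coordinate is gaussian
  have hstep2 : ∀ d, (gaussianReal 0 (Real.toNNReal (σ d ^ 2))).map (f d)
      = gaussianReal (s d ^ 2 / (2 * σ d ^ 2)) (Real.toNNReal (s d ^ 2 / σ d ^ 2)) := by
    intro d
    have hfd : f d = (· + s d ^ 2 / (2 * σ d ^ 2)) ∘ ((-(s d) / σ d ^ 2) * ·) := by
      ext t
      simp only [hf, Function.comp_apply]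
      field_simp
      ring
    rw [hfd, ← Measure.map_map (measurable_add_const _) (measurable_const_mul _),
      gaussianReal_map_const_mul, gaussianReal_map_add_const, mul_zero, zero_add]
    congr 1
    rw [← NNReal.coe_inj]
    push_cast
    rw [Real.coe_toNNReal _ (le_of_lt (hσ2 d)),
      Real.coe_toNNReal _ (div_nonneg (sq_nonneg _) (le_of_lt (hσ2 d)))]
    have hσd : σ d ≠ 0 := (hσ d).ne'
    field_simp
  -- combine
  have hcomp : (fun x : Fin k → ℝ => ∑ d, (s d ^ 2 - 2 * s d * x d) / (2 * σ d ^ 2))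
      = (fun y : Fin k → ℝ => ∑ d, y d) ∘ (fun x : Fin k → ℝ => fun d => f d (x d)) := rfl
  have hsm : Measurable fun y : Fin k → ℝ => ∑ d, y d := by measurability
  rw [hcomp, ← Measure.map_map hsm (by fun_prop), hstep1]
  simp_rw [hstep2]
  rw [gauss_sum_pi]
  congr 1
  rw [← NNReal.coe_inj]
  rw [Real.coe_toNNReal _ (Finset.sum_nonneg fun d _ => by positivity)]
  push_cast
  refine Finset.sum_congr rfl fun d _ => ?_
  rw [Real.coe_toNNReal _ (by positivity)]
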